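/- The polynomial 4z + 4z^3 is not interpolating: its spectrum (the set of exponents with nonzero coefficients) is {1, 3}, which is not an integer interval. -/
import Mathlib


open Polynomial

theorem stmt_8 :
    {i : ℕ | ((4 : Polynomial ℤ) * X + 4 * X ^ 3).coeff i ≠ 0} = {1, 3} ∧
      ∀ m n : ℕ, (Set.Icc m n : Set ℕ) ≠ ({1, 3} : Set ℕ) := by
  constructor
  · ext i
    simp only [Set.mem_setOf_eq, coeff_add, coeff_mul_X, Polynomial.coeff_ofNat_mul,
      Set.mem_insert_iff, Set.mem_singleton_iff]
    rcases i with _ | _ | _ | _ | i <;>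
      simp [coeff_X, coeff_X_pow, Polynomial.coeff_ofNat_mul]
  · intro m n h
    have h1 : (1 : ℕ) ∈ Set.Icc m n := h ▸ (by simp)
    have h3 : (3 : ℕ) ∈ Set.Icc m n := h ▸ (by simp)
    have h2 : (2 : ℕ) ∈ Set.Icc m n := by
      simp only [Set.mem_Icc] at *; omega
    rw [h] at h2
    simp at h2
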